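/- Let ξ be a root of unity with N = ord(ξ^4) (the order of ξ^4 as a root of unity) and ε = ξ^{N²}. Then T_N(-ξ² - ξ^{-2}) = -ε² - ε^{-2}, where T_N is the N-th Chebyshev polynomial of the first kind. Moreover ε ∈ {1, -1, i, -i} and ξ^{2N} = ±1. -/

import Mathlib

open Polynomial

/-- Chebyshev polynomials of the first kind (normalization `T 0 = 2`). -/
noncomputable def chebT : ℕ → Polynomial ℤ
  | 0 => 2
  | 1 => X
  | n + 2 => X * chebT (n + 1) - chebT n

/-- Let `ξ` be a complex root of unity, `N = ord(ξ⁴)` and `ε = ξ^{N²}`. Then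
`T_N(-ξ² - ξ⁻²) = -ε² - ε⁻²`; moreover `ε ∈ {1, -1, i, -i}` and `ξ^{2N} = ±1`. -/
lemma cheb_eval (y : ℂ) (hy : y ≠ 0) : ∀ n : ℕ,
    (Polynomial.aeval (y + y⁻¹)) (chebT n) = y ^ n + (y⁻¹) ^ n := by
  intro n
  induction n using Nat.twoStepInduction with
  | zero => norm_num [chebT, map_ofNat]
  | one => simp [chebT]
  | more n ih2 ih1 =>
    rw [show chebT (n + 2) = X * chebT (n + 1) - chebT n from rfl]
    simp only [map_sub, map_mul, aeval_X, ih1, ih2]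
    field_simp
    linear_combination (y⁻¹ ^ n * (y - y⁻¹)) * mul_inv_cancel₀ hy

theorem chebT_neg_xi_sq (ξ : ℂ) (hroot : ∃ m : ℕ, 0 < m ∧ ξ ^ m = 1)
    (N : ℕ) (hN : 0 < N) (h1 : (ξ ^ 4) ^ N = 1)
    (hmin : ∀ m : ℕ, 0 < m → (ξ ^ 4) ^ m = 1 → N ≤ m) :
    (Polynomial.aeval (-ξ ^ 2 - (ξ⁻¹) ^ 2)) (chebT N)
        = -(ξ ^ (N ^ 2)) ^ 2 - ((ξ ^ (N ^ 2))⁻¹) ^ 2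
    ∧ ξ ^ (N ^ 2) ∈ ({1, -1, Complex.I, -Complex.I} : Set ℂ)
    ∧ (ξ ^ (2 * N) = 1 ∨ ξ ^ (2 * N) = -1) := by
  have hξ : ξ ≠ 0 := by
    obtain ⟨m, hm, h⟩ := hroot
    intro h0
    rw [h0, zero_pow hm.ne'] at h
    exact zero_ne_one h
  have hy : (-ξ ^ 2 : ℂ) ≠ 0 := neg_ne_zero.mpr (pow_ne_zero 2 hξ)
  -- rewrite the evaluation point
  have hpt : -ξ ^ 2 - (ξ⁻¹) ^ 2 = (-ξ ^ 2) + (-ξ ^ 2)⁻¹ := by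
    rw [inv_neg, inv_pow]; ring
  have hLHS : (Polynomial.aeval (-ξ ^ 2 - (ξ⁻¹) ^ 2)) (chebT N)
      = (-ξ ^ 2) ^ N + ((-ξ ^ 2)⁻¹) ^ N := by
    rw [hpt]; exact cheb_eval _ hy N
  -- s = ξ^(2N)
  have h4N : ξ ^ (4 * N) = 1 := by rw [pow_mul]; exact h1
  have hs2 : (ξ ^ (2 * N)) ^ 2 = 1 := by
    rw [← pow_mul, show 2 * N * 2 = 4 * N by ring]; exact h4N
  have hs : ξ ^ (2 * N) = 1 ∨ ξ ^ (2 * N) = -1 := by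
    rw [sq] at hs2; exact mul_self_eq_one_iff.mp hs2
  -- ε² in terms of s
  have hε2 : (ξ ^ N ^ 2) ^ 2 = (ξ ^ (2 * N)) ^ N := by
    rw [← pow_mul, ← pow_mul]; congr 1; ring
  have hA : (-ξ ^ 2) ^ N = (-1) ^ N * ξ ^ (2 * N) := by
    rw [neg_pow, ← pow_mul]
  have hinv : ((-ξ ^ 2)⁻¹) ^ N = ((-ξ ^ 2) ^ N)⁻¹ := by rw [inv_pow]
  have hεinv : ((ξ ^ N ^ 2)⁻¹) ^ 2 = ((ξ ^ N ^ 2) ^ 2)⁻¹ := by rw [inv_pow]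
  refine ⟨?_, ?_, hs⟩
  · rcases hs with hs1 | hs1
    · -- ξ^{2N} = 1 forces N odd
      have hodd : Odd N := by
        rcases Nat.even_or_odd N with he | ho
        · exfalso
          obtain ⟨k, hk⟩ := he
          have hk0 : 0 < k := by omega
          have : (ξ ^ 4) ^ k = 1 := by
            rw [← pow_mul, show 4 * k = 2 * N by omega]; exact hs1
          have := hmin k hk0 this
          omega
        · exact ho
      rw [hLHS, hinv, hA, hεinv, hε2, hs1, hodd.neg_one_pow]
      norm_num
    · rw [hLHS, hinv, hA, hεinv, hε2, hs1]
      rcases Nat.even_or_odd N with he | ho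
      · rw [he.neg_one_pow]; norm_num
      · rw [ho.neg_one_pow]; norm_num
  · -- membership
    have hε4 : ((ξ ^ N ^ 2) ^ 2) ^ 2 = 1 := by
      rw [hε2, ← pow_mul, mul_comm N 2, pow_mul, hs2, one_pow]
    have he2 : (ξ ^ N ^ 2) ^ 2 = 1 ∨ (ξ ^ N ^ 2) ^ 2 = -1 := by
      rw [sq ((ξ ^ N ^ 2) ^ 2)] at hε4
      exact mul_self_eq_one_iff.mp hε4
    rcases he2 with h2 | h2
    · rw [sq] at h2
      rcases mul_self_eq_one_iff.mp h2 with h | h <;> simp [h]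
    · have hf : (ξ ^ N ^ 2 - Complex.I) * (ξ ^ N ^ 2 + Complex.I) = 0 := by
        have hI : Complex.I ^ 2 = -1 := Complex.I_sq
        linear_combination h2 - hI
      rcases mul_eq_zero.mp hf with h | h
      · have hεI : ξ ^ N ^ 2 = Complex.I := sub_eq_zero.mp h
        rw [hεI]; simp
      · have hεI : ξ ^ N ^ 2 = -Complex.I := eq_neg_of_add_eq_zero_left h
        rw [hεI]; simp
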